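/- Let p ≥ 2 and let G be a 2p-regular graph with a (p+2)-star colouring f. Then f is a fall colouring: every vertex of G sees all p+2 colours in its closed neighbourhood. -/

import Mathlib

def IsStarColoring {V : Type*} {α : Type*} (G : SimpleGraph V) (f : V → α) : Prop :=
  (∀ ⦃u v : V⦄, G.Adj u v → f u ≠ f v) ∧
  ∀ ⦃a b c d : V⦄, G.Adj a b → G.Adj b c → G.Adj c d →
    a ≠ c → a ≠ d → b ≠ d → ¬(f a = f c ∧ f b = f d)

section Aux

variable {V : Type*} {p : ℕ} [Fintype V] (G : SimpleGraph V) [DecidableRel G.Adj]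
  (f : V → Fin (p + 2))

/-- number of neighbours of `v` coloured `j` -/
def dcol (v : V) (j : Fin (p + 2)) : ℕ :=
  ((G.neighborFinset v).filter (fun u => f u = j)).card

/-- colour `j` appears at least twice in the neighbourhood of `v` -/
def heavyP (v : V) (j : Fin (p + 2)) : Prop := 2 ≤ dcol G f v j

instance (v : V) (j : Fin (p + 2)) : Decidable (heavyP G f v j) := by
  unfold heavyP; infer_instance

lemma lemA (hf : IsStarColoring G f) {v u : V} (hadj : G.Adj v u)
    (h1 : heavyP G f v (f u)) (h2 : heavyP G f u (f v)) : False := by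
  obtain ⟨w, hw, hwu⟩ := Finset.exists_mem_ne (h1 : 1 < _) u
  obtain ⟨x, hx, hxv⟩ := Finset.exists_mem_ne (h2 : 1 < _) v
  simp only [Finset.mem_filter, SimpleGraph.mem_neighborFinset] at hw hx
  have hwx : w ≠ x := by
    intro h
    exact hf.1 hadj (hx.2 ▸ h ▸ hw.2.symm).symm
  exact hf.2 hw.1.symm hadj hx.1 hwu hwx (Ne.symm hxv) ⟨hw.2, hx.2.symm⟩

end Aux

theorem stmt6 {V : Type*} [Fintype V] (G : SimpleGraph V) (p : ℕ) (hp : 2 ≤ p)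
    (hreg : ∀ v : V, (G.neighborSet v).ncard = 2 * p)
    (f : V → Fin (p + 2)) (hf : IsStarColoring G f) :
    ∀ v : V, ∀ c : Fin (p + 2), c ≠ f v → ∃ u : V, G.Adj v u ∧ f u = c := by
  classical
  by_contra hcon
  push_neg at hcon
  obtain ⟨v0, c0, hc0, hmiss⟩ := hcon
  set n := Fintype.card V with hn
  -- degrees
  have hdeg : ∀ v : V, (G.neighborFinset v).card = 2 * p := by
    intro v
    rw [← hreg v, Set.ncard_eq_toFinset_card']
    simp [SimpleGraph.neighborFinset]
  -- no neighbour has v's own colour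
  have hd0 : ∀ v : V, dcol G f v (f v) = 0 := by
    intro v
    rw [dcol, Finset.card_eq_zero, Finset.filter_eq_empty_iff]
    intro u hu
    rw [SimpleGraph.mem_neighborFinset] at hu
    exact hf.1 hu.symm
  have hd0' : dcol G f v0 c0 = 0 := by
    rw [dcol, Finset.card_eq_zero, Finset.filter_eq_empty_iff]
    intro u hu
    rw [SimpleGraph.mem_neighborFinset] at hu
    exact hmiss u hu
  -- sum of colour counts is the degree
  have hdsum : ∀ v : V, ∑ j, dcol G f v j = 2 * p := by
    intro v
    rw [← hdeg v]
    exact (Finset.card_eq_sum_card_fiberwise (fun u _ => Finset.mem_univ (f u))).symm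
  -- there exists a heavy colour at every vertex
  have hheavy : ∀ v : V, ∃ j, heavyP G f v j := by
    intro v
    by_contra h
    push_neg at h
    simp only [heavyP, not_le] at h
    have : ∑ j, dcol G f v j ≤ ∑ j ∈ (Finset.univ.erase (f v)), 1 := by
      rw [← Finset.sum_erase _ (hd0 v)]
      exact Finset.sum_le_sum fun j _ => Nat.lt_succ_iff.mp (h j)
    rw [hdsum v] at this
    simp [Finset.card_erase_of_mem] at this
    omega
  -- the set of colours appearing exactly once
  have hOcard : ∀ v : V, (Finset.univ.filter (fun j => dcol G f v j = 1)).card +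
      (Finset.univ.filter (fun j => heavyP G f v j)).card ≤ p + 2 - 1 := by
    intro v
    rw [← Finset.card_union_of_disjoint]
    · have hsub : (Finset.univ.filter (fun j => dcol G f v j = 1)) ∪
          (Finset.univ.filter (fun j => heavyP G f v j)) ⊆ Finset.univ.erase (f v) := by
        intro j hj
        simp only [Finset.mem_union, Finset.mem_filter, heavyP] at hj
        rw [Finset.mem_erase]
        refine ⟨?_, Finset.mem_univ j⟩
        intro h
        rw [h] at hj
        rw [hd0 v] at hj
        simp at hj; have := (Finset.mem_filter.mp hj).2; simp [hd0 v] at this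
      calc _ ≤ (Finset.univ.erase (f v)).card := Finset.card_le_card hsub
        _ = p + 2 - 1 := by simp [Finset.card_erase_of_mem]
    · rw [Finset.disjoint_filter]
      intro j _ h1 h2
      rw [heavyP] at h2
      omega
  have hOv : ∀ v : V, (Finset.univ.filter (fun j => dcol G f v j = 1)).card ≤ p := by
    intro v
    have h1 : 1 ≤ (Finset.univ.filter (fun j => heavyP G f v j)).card := by
      obtain ⟨j, hj⟩ := hheavy v
      exact Finset.card_pos.mpr ⟨j, Finset.mem_filter.mpr ⟨Finset.mem_univ j, hj⟩⟩
    have := hOcard v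
    omega
  have hOv0 : (Finset.univ.filter (fun j => dcol G f v0 j = 1)).card ≤ p - 1 := by
    -- stronger bound: the one-sets avoid both f v0 and c0
    have hsub : (Finset.univ.filter (fun j => dcol G f v0 j = 1)) ∪
        (Finset.univ.filter (fun j => heavyP G f v0 j)) ⊆
        (Finset.univ.erase (f v0)).erase c0 := by
      intro j hj
      simp only [Finset.mem_union, Finset.mem_filter, heavyP] at hj
      rw [Finset.mem_erase, Finset.mem_erase]
      refine ⟨?_, ?_, Finset.mem_univ j⟩
      · intro h; rw [h, hd0'] at hj; simp at hj; have := (Finset.mem_filter.mp hj).2; simp [hd0'] at this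
      · intro h; rw [h, hd0 v0] at hj; simp at hj; have := (Finset.mem_filter.mp hj).2; simp [hd0 v0] at this
    have hcard : ((Finset.univ.erase (f v0)).erase c0).card = p := by
      rw [Finset.card_erase_of_mem (Finset.mem_erase.mpr ⟨hc0, Finset.mem_univ c0⟩)]
      simp [Finset.card_erase_of_mem]
    have hdisj : Disjoint (Finset.univ.filter (fun j => dcol G f v0 j = 1))
        (Finset.univ.filter (fun j => heavyP G f v0 j)) := by
      rw [Finset.disjoint_filter]
      intro j _ h1 h2
      rw [heavyP] at h2
      omega
    have h1 : 1 ≤ (Finset.univ.filter (fun j => heavyP G f v0 j)).card := by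
      obtain ⟨j, hj⟩ := hheavy v0
      exact Finset.card_pos.mpr ⟨j, Finset.mem_filter.mpr ⟨Finset.mem_univ j, hj⟩⟩
    have := (Finset.card_union_of_disjoint hdisj) ▸ Finset.card_le_card hsub
    rw [hcard] at this
    omega
  -- S v : number of neighbours u with heavy colour f u
  set S : V → ℕ := fun v => ((G.neighborFinset v).filter (fun u => heavyP G f v (f u))).card
    with hS
  -- L v ≤ Oset card
  have hLB : ∀ v : V, ((G.neighborFinset v).filter (fun u => ¬ heavyP G f v (f u))).card ≤
      (Finset.univ.filter (fun j => dcol G f v j = 1)).card := by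
    intro v
    apply Finset.card_le_card_of_injOn f
    · intro u hu
      simp only [Finset.mem_coe, Finset.mem_filter, SimpleGraph.mem_neighborFinset, heavyP, not_le] at hu
      simp only [Finset.mem_coe, Finset.mem_filter, Finset.mem_univ, true_and]
      have : 1 ≤ dcol G f v (f u) := by
        rw [dcol]
        apply Finset.card_pos.mpr
        refine ⟨u, Finset.mem_filter.mpr ⟨?_, rfl⟩⟩
        rw [SimpleGraph.mem_neighborFinset]
        exact hu.1
      omega
    · intro u hu u' hu' heq
      by_contra hne
      simp only [Finset.mem_coe, Finset.mem_filter, SimpleGraph.mem_neighborFinset,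
        heavyP, not_le] at hu hu'
      have h2 : 2 ≤ dcol G f v (f u) := by
        rw [dcol]
        apply Finset.one_lt_card.mpr
        refine ⟨u, ?_, u', ?_, hne⟩
        · refine Finset.mem_filter.mpr ⟨?_, rfl⟩
          rw [SimpleGraph.mem_neighborFinset]; exact hu.1
        · refine Finset.mem_filter.mpr ⟨?_, heq.symm⟩
          rw [SimpleGraph.mem_neighborFinset]; exact hu'.1
      omega
  -- S v ≥ 2p - (one-set card)
  have hSL : ∀ v : V, S v + ((G.neighborFinset v).filter (fun u => ¬ heavyP G f v (f u))).card
      = 2 * p := by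
    intro v
    rw [hS, ← hdeg v]
    exact Finset.card_filter_add_card_filter_not _
  have hSp : ∀ v : V, p ≤ S v := by
    intro v
    have := hSL v
    have := hLB v
    have := hOv v
    omega
  have hSp0 : p + 1 ≤ S v0 := by
    have := hSL v0
    have hp' := hp
    have := hLB v0
    have h := hOv0
    omega
  -- global count: T
  set T : Finset (V × V) :=
    Finset.univ.filter (fun e => G.Adj e.1 e.2 ∧ heavyP G f e.1 (f e.2)) with hT
  set A : Finset (V × V) := Finset.univ.filter (fun e => G.Adj e.1 e.2) with hA
  have hTcard : T.card = ∑ v, S v := by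
    rw [Finset.card_eq_sum_card_fiberwise (fun e _ => Finset.mem_univ e.1)]
    apply Finset.sum_congr rfl
    intro v _
    apply Finset.card_nbij' (fun e => e.2) (fun u => (v, u))
    · intro e he
      simp only [Finset.mem_coe, hT, Finset.mem_filter, Finset.mem_univ, true_and] at he
      obtain ⟨⟨h1, h2⟩, h3⟩ := he
      subst h3
      simp only [Finset.mem_coe, Finset.mem_filter, SimpleGraph.mem_neighborFinset]
      exact ⟨h1, h2⟩
    · intro u hu
      simp only [Finset.mem_coe, Finset.mem_filter, SimpleGraph.mem_neighborFinset] at hu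
      simp [hT, hu.1, hu.2]
    · intro e he
      simp only [Finset.mem_coe, hT, Finset.mem_filter] at he
      rw [← he.2]
    · intro u _
      rfl
  have hAcard : A.card = 2 * (p * n) := by
    rw [Finset.card_eq_sum_card_fiberwise (fun e _ => Finset.mem_univ e.1)]
    have : ∀ v : V, (A.filter (fun e => e.1 = v)).card = 2 * p := by
      intro v
      rw [← hdeg v]
      apply Finset.card_nbij' (fun e => e.2) (fun u => (v, u))
      · intro e he
        simp only [Finset.mem_coe, hA, Finset.mem_filter, Finset.mem_univ, true_and] at he
        obtain ⟨h1, h3⟩ := he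
        subst h3
        simpa [SimpleGraph.mem_neighborFinset] using h1
      · intro u hu
        simp only [Finset.mem_coe, SimpleGraph.mem_neighborFinset] at hu
        simp [hA, hu]
      · intro e he
        simp only [Finset.mem_coe, hA, Finset.mem_filter] at he
        rw [← he.2]
      · intro u _
        rfl
    rw [Finset.sum_congr rfl (fun v _ => this v)]
    rw [Finset.sum_const, Finset.card_univ, smul_eq_mul, hn]
    ring
  have hTA : T ⊆ A := by
    intro e he
    simp only [hT, Finset.mem_filter] at he
    simp [hA, he.2.1]
  have hswap : T.card ≤ (A \ T).card := by
    apply Finset.card_le_card_of_injOn (fun e => (e.2, e.1))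
    · intro e he
      simp only [Finset.mem_coe, hT, Finset.mem_filter, Finset.mem_univ, true_and] at he
      simp only [Finset.mem_coe, Finset.mem_sdiff, hA, hT, Finset.mem_filter, Finset.mem_univ, true_and]
      refine ⟨he.1.symm, ?_⟩
      rintro ⟨h1, h2⟩
      exact lemA G f hf he.1 he.2 h2
    · intro e _ e' _ h
      simp only [Prod.mk.injEq] at h
      exact Prod.ext h.2 h.1
  have hT2 : 2 * T.card ≤ A.card := by
    have := Finset.card_sdiff_of_subset hTA
    omega
  -- lower bound on sum of S
  have hsum : p * n < ∑ v, S v := by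
    calc p * n = ∑ _v : V, p := by rw [Finset.sum_const, Finset.card_univ, smul_eq_mul, hn]; ring
    _ < ∑ v, S v := by
        apply Finset.sum_lt_sum (fun v _ => hSp v)
        exact ⟨v0, Finset.mem_univ v0, by omega⟩
  rw [← hTcard] at hsum
  omega
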